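/- Let n ≥ 1 and let u1,...,un, g1,...,gn and beta be positive real numbers. For each i define beta_i* = (g_i · beta · ∏_{x ≠ i} u_x) / (∑_{y=1}^{n} g_y · ∏_{x ≠ y} u_x). Then ∑_{i=1}^{n} beta_i* = beta, and for all positive real numbers beta1,...,beta_n with ∑_{i=1}^{n} beta_i ≤ beta, the quantity ∑_{i=1}^{n} (g_i/u_i)·log(1/(2·beta_i*)) ≤ ∑_{i=1}^{n} (g_i/u_i)·log(1/(2·beta_i)). That is, the allocation (beta_1*,...,beta_n*) minimizes the total privacy loss ∑_i epsilon_i where epsilon_i = (g_i/u_i)·log(1/(2·beta_i)), subject to ∑_i beta_i ≤ beta. -/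

import Mathlib

open Real Finset

/-- The optimal FNR-budget allocation for `n` sub-queries:
`βᵢ* = gᵢ·β·∏_{x≠i} uₓ / (∑_y g_y·∏_{x≠y} uₓ)`. -/
noncomputable def betaStar (n : ℕ) (u g : Fin n → ℝ) (β : ℝ) (i : Fin n) : ℝ :=
  (g i * β * ∏ x ∈ Finset.univ.erase i, u x) /
    (∑ y, g y * ∏ x ∈ Finset.univ.erase y, u x)

/-- Optimal budget apportionment for a complex query of `n` aggregate threshold
sub-queries: the allocation `βᵢ*` sums to `β` and minimizes the total privacy loss
`∑ᵢ (gᵢ/uᵢ)·log(1/(2βᵢ))` subject to `∑ᵢ βᵢ ≤ β`. -/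
theorem probe_n_query_apportionment
    (n : ℕ) (hn : 1 ≤ n) (u g : Fin n → ℝ) (β : ℝ)
    (hu : ∀ i, 0 < u i) (hg : ∀ i, 0 < g i) (hβ : 0 < β) :
    (∑ i, betaStar n u g β i) = β ∧
    ∀ b : Fin n → ℝ, (∀ i, 0 < b i) → (∑ i, b i) ≤ β →
      ∑ i, (g i / u i) * Real.log (1 / (2 * betaStar n u g β i)) ≤
        ∑ i, (g i / u i) * Real.log (1 / (2 * b i)) := by
  have hne : (Finset.univ : Finset (Fin n)).Nonempty := by
    haveI : NeZero n := ⟨by omega⟩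
    exact Finset.univ_nonempty
  obtain ⟨w, hw⟩ : ∃ w : Fin n → ℝ, w = fun i => g i / u i := ⟨_, rfl⟩
  have hwdef : ∀ i, g i / u i = w i := fun i => by rw [hw]
  have hwpos : ∀ i, 0 < w i := fun i => by rw [hw]; exact div_pos (hg i) (hu i)
  obtain ⟨S, hS⟩ : ∃ S : ℝ, S = ∑ i, w i := ⟨_, rfl⟩
  have hSpos : 0 < S := hS ▸ Finset.sum_pos (fun i _ => hwpos i) hne
  have hPpos : 0 < ∏ x, u x := Finset.prod_pos (fun i _ => hu i)
  have hterm : ∀ j : Fin n, g j * ∏ x ∈ Finset.univ.erase j, u x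
      = w j * ∏ x, u x := by
    intro j
    have h : (∏ x ∈ Finset.univ.erase j, u x) * u j = ∏ x, u x :=
      Finset.prod_erase_mul _ _ (Finset.mem_univ j)
    rw [← h, hw]
    field_simp
    rw [mul_div_cancel_right₀ _ (hu j).ne']
  have hbs : ∀ i, betaStar n u g β i = w i * β / S := by
    intro i
    unfold betaStar
    rw [show g i * β * ∏ x ∈ Finset.univ.erase i, u x
          = β * (g i * ∏ x ∈ Finset.univ.erase i, u x) from by ring,
        hterm i]
    simp only [hterm]
    rw [← Finset.sum_mul, ← hS]
    rw [show β * (w i * ∏ x, u x) = (∏ x, u x) * (w i * β) from by ring,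
        show S * ∏ x, u x = (∏ x, u x) * S from mul_comm _ _,
        mul_div_mul_left _ _ hPpos.ne']
  have hbspos : ∀ i, 0 < betaStar n u g β i := by
    intro i
    rw [hbs i]
    exact div_pos (mul_pos (hwpos i) hβ) hSpos
  have hsum : (∑ i, betaStar n u g β i) = β := by
    simp only [hbs]
    rw [← Finset.sum_div, ← Finset.sum_mul, ← hS]
    field_simp
  refine ⟨hsum, ?_⟩
  intro b hb hble
  have hkey : ∑ i, w i * Real.log (b i / betaStar n u g β i) ≤ 0 := by
    have h1 : ∀ i : Fin n, w i * Real.log (b i / betaStar n u g β i)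
        ≤ b i * S / β - w i := by
      intro i
      have hpos : 0 < b i / betaStar n u g β i := div_pos (hb i) (hbspos i)
      have hlog := Real.log_le_sub_one_of_pos hpos
      have h2 := mul_le_mul_of_nonneg_left hlog (hwpos i).le
      refine h2.trans_eq ?_
      rw [hbs i, div_div_eq_mul_div, mul_sub, mul_one, mul_div_assoc',
          mul_div_mul_left _ _ (hwpos i).ne']
    calc ∑ i, w i * Real.log (b i / betaStar n u g β i)
        ≤ ∑ i, (b i * S / β - w i) := Finset.sum_le_sum (fun i _ => h1 i)
      _ = (∑ i, b i) * S / β - S := by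
          rw [Finset.sum_sub_distrib, ← hS]
          congr 1
          rw [← Finset.sum_div, ← Finset.sum_mul]
      _ ≤ β * S / β - S := by
          gcongr
      _ = 0 := by field_simp; ring
  rw [← sub_nonneg, ← Finset.sum_sub_distrib]
  have heq : ∀ i : Fin n,
      (g i / u i) * Real.log (1 / (2 * b i)) -
        (g i / u i) * Real.log (1 / (2 * betaStar n u g β i))
        = -(w i * Real.log (b i / betaStar n u g β i)) := by
    intro i
    have h1 : Real.log (1 / (2 * b i)) = -(Real.log 2 + Real.log (b i)) := by
      rw [one_div, Real.log_inv, Real.log_mul two_ne_zero (hb i).ne']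
    have h2 : Real.log (1 / (2 * betaStar n u g β i))
        = -(Real.log 2 + Real.log (betaStar n u g β i)) := by
      rw [one_div, Real.log_inv, Real.log_mul two_ne_zero (hbspos i).ne']
    have h3 : Real.log (b i / betaStar n u g β i)
        = Real.log (b i) - Real.log (betaStar n u g β i) :=
      Real.log_div (hb i).ne' (hbspos i).ne'
    rw [h1, h2, h3, hwdef i]
    ring
  rw [Finset.sum_congr rfl (fun i _ => heq i)]
  rw [Finset.sum_neg_distrib]
  linarith [hkey]
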